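/- For every x ∈ [0,1]^V with x ≠ 0, one has x ∈ R(G) if and only if ‖x‖ < ρ(x/‖x‖). (Lemma 4.3(2).) -/

import Mathlib

open scoped Classical ENNReal

set_option linter.unusedSectionVars false

variable {V : Type*} [Fintype V] [DecidableEq V]

/-- An admissible swap exchanges two consecutive letters that are adjacent in `G`. -/
def AdjSwap (G : SimpleGraph V) (w w' : List V) : Prop :=
  ∃ (a b : List V) (u v : V), G.Adj u v ∧ w = a ++ u :: v :: b ∧ w' = a ++ v :: u :: b

/-- Two words are equivalent if one can be transformed into the other by finitely many
admissible swaps. -/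
def WordEquiv (G : SimpleGraph V) : List V → List V → Prop :=
  Relation.ReflTransGen (AdjSwap G)

lemma adjSwap_symm (G : SimpleGraph V) : Symmetric (AdjSwap G) := by
  rintro w w' ⟨a, b, u, v, h, rfl, rfl⟩
  exact ⟨a, b, v, u, h.symm, rfl, rfl⟩

/-- The setoid of words modulo admissible swaps. -/
def wordSetoid (G : SimpleGraph V) : Setoid (List V) where
  r := WordEquiv G
  iseqv := ⟨fun _ => Relation.ReflTransGen.refl,
    fun h => by
      unfold WordEquiv at *
      induction h with
      | refl => exact Relation.ReflTransGen.refl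
      | tail _ hs ih => exact Relation.ReflTransGen.head (adjSwap_symm G hs) ih,
    fun h h' => Relation.ReflTransGen.trans h h'⟩

/-- A word is `G`-reduced if between any two equal letters there is a letter distinct from
them and not adjacent to them. -/
def IsGReduced (G : SimpleGraph V) (w : List V) : Prop :=
  ∀ i j : Fin w.length, i < j → w.get i = w.get j →
    ∃ k : Fin w.length, i < k ∧ k < j ∧ w.get k ≠ w.get i ∧ ¬ G.Adj (w.get k) (w.get i)

/-- The product `x_{w_1} ⋯ x_{w_ℓ}` depends only on the equivalence class of a word. -/
noncomputable def classProd (G : SimpleGraph V) (x : V → ℝ≥0∞) :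
    Quotient (wordSetoid G) → ℝ≥0∞ :=
  Quotient.lift (fun w : List V => (w.map x).prod) (by
    intro a b h
    induction h with
    | refl => rfl
    | tail _ hs ih =>
        obtain ⟨a', b', u, v, huv, rfl, rfl⟩ := hs
        rw [ih]
        simp only [List.map_append, List.prod_append, List.map_cons, List.prod_cons]
        ring)

/-- `tildeF G x` : the sum over all equivalence classes of words of `∏ x_{w_i}`,
valued in `[0,∞]`. -/
noncomputable def tildeF (G : SimpleGraph V) (x : V → ℝ) : ℝ≥0∞ :=
  ∑' c : Quotient (wordSetoid G), classProd G (fun v => ENNReal.ofReal (x v)) c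

/-- `redF G x` : the sum over all equivalence classes of `G`-reduced words of `∏ x_{w_i}`,
valued in `[0,∞]`. -/
noncomputable def redF (G : SimpleGraph V) (x : V → ℝ) : ℝ≥0∞ :=
  ∑' c : {c : Quotient (wordSetoid G) // ∃ w, IsGReduced G w ∧ Quotient.mk (wordSetoid G) w = c},
    classProd G (fun v => ENNReal.ofReal (x v)) c.1

/-- The clique polynomial `𝕶_{G,V'}(x) = ∑_{cliques K ⊆ V'} (-1)^{|K|} ∏_{v ∈ K} x_v`. -/
noncomputable def cliquePoly (G : SimpleGraph V) (V' : Finset V) (x : V → ℝ) : ℝ :=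
  ∑ K ∈ V'.powerset.filter (fun K : Finset V => G.IsClique (K : Set V)),
    (-1 : ℝ) ^ K.card * ∏ v ∈ K, x v

/-- The Euclidean norm on `ℝ^V`. -/
noncomputable def eucNorm (x : V → ℝ) : ℝ := Real.sqrt (∑ v, x v ^ 2)

/-- `min_{V' ⊆ V} 𝕶_{G,V'}(x)`. -/
noncomputable def minK (G : SimpleGraph V) (x : V → ℝ) : ℝ :=
  Finset.univ.inf' ⟨∅, Finset.mem_univ _⟩ fun V' : Finset V => cliquePoly G V' x

/-- `ρ(u) = inf {r ∈ [0,∞) : min_{V' ⊆ V} 𝕶_{G,V'}(r·u) = 0}`. -/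
noncomputable def rho (G : SimpleGraph V) (u : V → ℝ) : ℝ :=
  sInf {r : ℝ | 0 ≤ r ∧ minK G (r • u) = 0}

/-- The region `R(G) = {x ∈ [0,1]^V : 𝕶_{G,V'}(x) > 0 for all V' ⊆ V}`. -/
def regionR (G : SimpleGraph V) : Set (V → ℝ) :=
  {x | (∀ v, x v ∈ Set.Icc (0 : ℝ) 1) ∧ ∀ V' : Finset V, 0 < cliquePoly G V' x}


lemma cliquePoly_congr (G : SimpleGraph V) (W : Finset V) {x y : V → ℝ}
    (h : ∀ v ∈ W, x v = y v) : cliquePoly G W x = cliquePoly G W y := by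
  unfold cliquePoly
  refine Finset.sum_congr rfl fun K hK => ?_
  simp only [Finset.mem_filter, Finset.mem_powerset] at hK
  congr 1
  exact Finset.prod_congr rfl fun v hv => h v (hK.1 hv)

lemma cliquePoly_zero (G : SimpleGraph V) (W : Finset V) : cliquePoly G W (0 : V → ℝ) = 1 := by
  unfold cliquePoly
  rw [Finset.sum_eq_single ∅]
  · simp
  · intro K hK hKne
    rw [Finset.prod_eq_zero (Finset.nonempty_iff_ne_empty.2 hKne).choose_spec]
    · ring
    · rfl
  · intro h
    exact absurd (by simp [SimpleGraph.IsClique] : (∅ : Finset V) ∈ _) h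

lemma cliquePoly_singleton (G : SimpleGraph V) (v : V) (x : V → ℝ) :
    cliquePoly G {v} x = 1 - x v := by
  unfold cliquePoly
  rw [show ({v} : Finset V).powerset.filter (fun K : Finset V => G.IsClique (K : Set V))
      = {∅, {v}} from ?_]
  · rw [Finset.sum_pair (by exact fun h => by simpa using congrArg Finset.card h : (∅ : Finset V) ≠ {v})]
    simp; ring
  · ext K
    simp only [Finset.mem_filter, Finset.mem_powerset, Finset.subset_singleton_iff,
      Finset.mem_insert, Finset.mem_singleton]
    constructor
    · rintro ⟨h, -⟩; exact h
    · rintro (rfl | rfl) <;> simp [SimpleGraph.IsClique]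

lemma cliquePoly_recursion (G : SimpleGraph V) (W : Finset V) (x : V → ℝ) {v : V} (hv : v ∈ W) :
    cliquePoly G W x = cliquePoly G (W.erase v) x
      - x v * cliquePoly G ((W.erase v).filter (G.Adj v)) x := by
  classical
  unfold cliquePoly
  set S := W.powerset.filter (fun K : Finset V => G.IsClique (K : Set V)) with hS
  have hsplit := Finset.sum_filter_add_sum_filter_not S (fun K => v ∈ K)
    (fun K : Finset V => (-1 : ℝ) ^ K.card * ∏ w ∈ K, x w)
  have h1 : S.filter (fun K => v ∉ K)
      = (W.erase v).powerset.filter (fun K : Finset V => G.IsClique (K : Set V)) := by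
    ext K
    simp only [hS, Finset.mem_filter, Finset.mem_powerset, Finset.subset_erase]
    tauto
  have h2 : ∑ K ∈ S.filter (fun K => v ∈ K), (-1 : ℝ) ^ K.card * ∏ w ∈ K, x w
      = ∑ K ∈ ((W.erase v).filter (G.Adj v)).powerset.filter
          (fun K : Finset V => G.IsClique (K : Set V)),
            -(x v * ((-1 : ℝ) ^ K.card * ∏ w ∈ K, x w)) := by
    refine Finset.sum_nbij' (fun K => K.erase v) (fun K => insert v K) ?_ ?_ ?_ ?_ ?_
    · intro K hK
      simp only [hS, Finset.mem_filter, Finset.mem_powerset] at hK ⊢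
      obtain ⟨⟨hKW, hKc⟩, hvK⟩ := hK
      refine ⟨fun u hu => ?_, hKc.subset (by simp [Finset.erase_subset])⟩
      rw [Finset.mem_erase] at hu
      rw [Finset.mem_filter, Finset.mem_erase]
      exact ⟨⟨hu.1, hKW hu.2⟩, (hKc hvK hu.2 (Ne.symm hu.1))⟩
    · intro K hK
      simp only [Finset.mem_filter, Finset.mem_powerset] at hK
      obtain ⟨hKN, hKc⟩ := hK
      simp only [hS, Finset.mem_filter, Finset.mem_powerset, Finset.mem_insert]
      have hvK : v ∉ K := fun h => (Finset.mem_erase.1 (Finset.mem_filter.1 (hKN h)).1).1 rfl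
      refine ⟨⟨?_, ?_⟩, by simp⟩
      · intro u hu
        rcases Finset.mem_insert.1 hu with rfl | hu
        · exact hv
        · exact Finset.erase_subset _ _ (Finset.mem_filter.1 (hKN hu)).1
      · rw [Finset.coe_insert]
        refine SimpleGraph.IsClique.insert hKc fun u hu _ => ?_
        exact (Finset.mem_filter.1 (hKN hu)).2
    · intro K hK
      exact Finset.insert_erase (Finset.mem_filter.1 hK).2
    · intro K hK
      refine Finset.erase_insert ?_
      simp only [Finset.mem_filter, Finset.mem_powerset] at hK
      exact fun h => (Finset.mem_erase.1 (Finset.mem_filter.1 (hK.1 h)).1).1 rfl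
    · intro K hK
      simp only [hS, Finset.mem_filter, Finset.mem_powerset] at hK
      obtain ⟨⟨hKW, hKc⟩, hvK⟩ := hK
      have hcard : K.card = (K.erase v).card + 1 := by
        have := Finset.card_pos.2 ⟨v, hvK⟩
        rw [Finset.card_erase_of_mem hvK]
        omega
      have hprod : ∏ w ∈ K, x w = x v * ∏ w ∈ K.erase v, x w :=
        (Finset.mul_prod_erase K x hvK).symm
      rw [hcard, hprod, pow_succ]
      ring
  rw [← hsplit, h2, h1, Finset.mul_sum, Finset.sum_neg_distrib]
  ring

lemma cliquePoly_mono_aux (G : SimpleGraph V) (x : V → ℝ)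
    (hx : ∀ W : Finset V, 0 < cliquePoly G W x) :
    ∀ (n : ℕ) (y : V → ℝ), (Finset.univ.filter fun v => y v ≠ x v).card ≤ n →
      (∀ v, y v ≤ x v) → ∀ W, cliquePoly G W x ≤ cliquePoly G W y := by
  intro n
  induction n with
  | zero =>
    intro y hcard _ W
    have hD : (Finset.univ.filter fun v => y v ≠ x v) = ∅ :=
      Finset.card_eq_zero.1 (Nat.le_zero.1 hcard)
    have heq : ∀ v, y v = x v := by
      intro v
      by_contra hne
      have : v ∈ (Finset.univ.filter fun v => y v ≠ x v) := by
        simp [hne]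
      simp [hD] at this
    exact (cliquePoly_congr G W fun v _ => (heq v).symm).le
  | succ n ih =>
    intro y hcard hy W
    rcases Finset.eq_empty_or_nonempty (Finset.univ.filter fun v => y v ≠ x v) with hD | hD
    · have heq : ∀ v, y v = x v := by
        intro v
        by_contra hne
        have : v ∈ (Finset.univ.filter fun v => y v ≠ x v) := by simp [hne]
        simp [hD] at this
      exact (cliquePoly_congr G W fun v _ => (heq v).symm).le
    · obtain ⟨v, hv⟩ := hD
      rw [Finset.mem_filter] at hv
      set z := Function.update y v (x v) with hz
      have hzv : z v = x v := Function.update_self v (x v) y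
      have hzw : ∀ w, w ≠ v → z w = y w := fun w hw => Function.update_of_ne hw _ _
      have hzle : ∀ w, z w ≤ x w := by
        intro w
        by_cases hwv : w = v
        · subst hwv; rw [hzv]
        · rw [hzw w hwv]; exact hy w
      have hzcard : (Finset.univ.filter fun w => z w ≠ x w).card ≤ n := by
        have hsub : (Finset.univ.filter fun w => z w ≠ x w)
            ⊆ (Finset.univ.filter fun w => y w ≠ x w).erase v := by
          intro w hw
          rw [Finset.mem_filter] at hw
          have hwv : w ≠ v := by
            intro h; subst h; exact hw.2 hzv
          rw [Finset.mem_erase, Finset.mem_filter]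
          exact ⟨hwv, Finset.mem_univ w, by rw [← hzw w hwv]; exact hw.2⟩
        have hvmem : v ∈ Finset.univ.filter (fun w => y w ≠ x w) := Finset.mem_filter.2 hv
        have h1 := Finset.card_le_card hsub
        have h2 := Finset.card_erase_of_mem hvmem
        have h3 := Finset.card_pos.2 ⟨v, hvmem⟩
        omega
      have ihz := ih z hzcard hzle
      by_cases hvW : v ∈ W
      · set N := (W.erase v).filter (G.Adj v) with hN
        have hvE : v ∉ W.erase v := Finset.notMem_erase v W
        have hvN : v ∉ N := fun h => hvE (Finset.mem_filter.1 h).1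
        have hrecy := cliquePoly_recursion G W y hvW
        have hrecz := cliquePoly_recursion G W z hvW
        have hEy : cliquePoly G (W.erase v) y = cliquePoly G (W.erase v) z :=
          cliquePoly_congr G _ fun w hw =>
            (hzw w (fun h => hvE (h ▸ hw))).symm
        have hNy : cliquePoly G N y = cliquePoly G N z :=
          cliquePoly_congr G _ fun w hw =>
            (hzw w (fun h => hvN (h ▸ hw))).symm
        have hNpos : 0 < cliquePoly G N z := lt_of_lt_of_le (hx N) (ihz N)
        have : cliquePoly G W z ≤ cliquePoly G W y := by
          rw [hrecy, hrecz, hEy, hNy, hzv]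
          nlinarith [hy v]
        exact le_trans (ihz W) this
      · have : cliquePoly G W y = cliquePoly G W z :=
          cliquePoly_congr G _ fun w hw =>
            (hzw w (fun h => hvW (h ▸ hw))).symm
        rw [this]
        exact ihz W

lemma cliquePoly_mono' (G : SimpleGraph V) {x y : V → ℝ}
    (hx : ∀ W : Finset V, 0 < cliquePoly G W x) (hy : ∀ v, y v ≤ x v) (W : Finset V) :
    cliquePoly G W x ≤ cliquePoly G W y :=
  cliquePoly_mono_aux G x hx _ y le_rfl hy W

lemma minK_le (G : SimpleGraph V) (x : V → ℝ) (W : Finset V) :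
    minK G x ≤ cliquePoly G W x :=
  Finset.inf'_le _ (Finset.mem_univ W)

lemma minK_zero (G : SimpleGraph V) : minK G (0 : V → ℝ) = 1 := by
  refine le_antisymm ((minK_le G 0 ∅).trans_eq (cliquePoly_zero G ∅)) ?_
  exact Finset.le_inf' _ _ fun W _ => (cliquePoly_zero G W).ge

lemma continuous_minK (G : SimpleGraph V) (u : V → ℝ) :
    Continuous fun r : ℝ => minK G (r • u) := by
  unfold minK
  refine Continuous.finset_inf'_apply _ fun W _ => ?_
  unfold cliquePoly
  refine continuous_finset_sum _ fun K _ => Continuous.mul continuous_const ?_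
  refine continuous_finset_prod _ fun v _ => ?_
  simp only [Pi.smul_apply, smul_eq_mul]
  exact continuous_id.mul continuous_const


/-- Lemma 4.3(2): for nonzero `x ∈ [0,1]^V`, `x ∈ R(G) ↔ ‖x‖ < ρ(x/‖x‖)`. -/
theorem mem_regionR_iff_lt_rho (G : SimpleGraph V) (x : V → ℝ)
    (hx : ∀ v, x v ∈ Set.Icc (0 : ℝ) 1) (hx0 : x ≠ 0) :
    x ∈ regionR G ↔ eucNorm x < rho G ((eucNorm x)⁻¹ • x) := by
  classical
  have hxnn : ∀ v, 0 ≤ x v := fun v => (hx v).1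
  obtain ⟨v₀, hv₀⟩ := Function.ne_iff.1 hx0
  have hv₀' : x v₀ ≠ 0 := hv₀
  set n := eucNorm x with hn
  have hn0 : 0 < n := by
    have hsum : 0 < ∑ w, x w ^ 2 :=
      Finset.sum_pos' (fun w _ => sq_nonneg _)
        ⟨v₀, Finset.mem_univ v₀,
          lt_of_le_of_ne (sq_nonneg _) (Ne.symm (pow_ne_zero 2 hv₀'))⟩
    exact Real.sqrt_pos.2 hsum
  set u : V → ℝ := n⁻¹ • x with hu
  have hnu : n • u = x := by
    rw [hu, smul_smul, mul_inv_cancel₀ hn0.ne', one_smul]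
  set f : ℝ → ℝ := fun r => minK G (r • u) with hfdef
  have hf : Continuous f := continuous_minK G u
  have hf0 : f 0 = 1 := by
    rw [hfdef]; simp only [zero_smul]; exact minK_zero G
  have hfn : f n = minK G x := by show minK G (n • u) = minK G x; rw [hnu]
  set S := {r : ℝ | 0 ≤ r ∧ minK G (r • u) = 0} with hSdef
  have hSeq : S = Set.Ici 0 ∩ f ⁻¹' {0} := by
    ext r; simp [hSdef, Set.mem_Ici, hfdef]
  have hSbdd : BddBelow S := ⟨0, fun r hr => hr.1⟩
  have hSclosed : IsClosed S := by
    rw [hSeq]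
    exact isClosed_Ici.inter (isClosed_singleton.preimage hf)
  have hSne : S.Nonempty := by
    have huv : 0 < u v₀ := by
      have : 0 < x v₀ := lt_of_le_of_ne (hxnn v₀) (Ne.symm hv₀')
      have : 0 < n⁻¹ * x v₀ := by positivity
      simpa [hu] using this
    set r₁ := (u v₀)⁻¹ with hr₁
    have hr₁pos : 0 < r₁ := by positivity
    have hfr₁ : f r₁ ≤ 0 := by
      have h1 : f r₁ ≤ cliquePoly G {v₀} (r₁ • u) := minK_le G _ _
      have h2 : cliquePoly G {v₀} (r₁ • u) = 1 - r₁ * u v₀ := by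
        rw [cliquePoly_singleton]; rfl
      rw [h2, hr₁, inv_mul_cancel₀ huv.ne'] at h1
      linarith
    have hsub := intermediate_value_Icc' hr₁pos.le hf.continuousOn
    have h0mem : (0 : ℝ) ∈ Set.Icc (f r₁) (f 0) := ⟨hfr₁, by rw [hf0]; norm_num⟩
    obtain ⟨r, hr, hfr⟩ := hsub h0mem
    exact ⟨r, hr.1, hfr⟩
  have hρ : rho G u ∈ S := by
    rw [show rho G u = sInf S from rfl]
    exact hSclosed.csInf_mem hSne hSbdd
  constructor
  · rintro ⟨-, hpos⟩
    by_contra hle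
    push_neg at hle
    have hyle : ∀ w, (rho G u • u) w ≤ x w := by
      intro w
      have h1 : rho G u * n⁻¹ ≤ n * n⁻¹ :=
        mul_le_mul_of_nonneg_right hle (inv_nonneg.2 hn0.le)
      rw [mul_inv_cancel₀ hn0.ne'] at h1
      have : (rho G u • u) w = (rho G u * n⁻¹) * x w := by
        simp [hu, mul_assoc]
      rw [this]
      nlinarith [hxnn w]
    have hge : ∀ W, 0 < cliquePoly G W (rho G u • u) :=
      fun W => lt_of_lt_of_le (hpos W) (cliquePoly_mono' G hpos hyle W)
    have h0 : 0 < minK G (rho G u • u) :=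
      (Finset.lt_inf'_iff _).2 fun W _ => hge W
    rw [hρ.2] at h0
    exact lt_irrefl 0 h0
  · intro hlt
    refine ⟨hx, fun W => ?_⟩
    have hfn_pos : 0 < f n := by
      rcases lt_trichotomy (f n) 0 with h | h | h
      · exfalso
        have hsub := intermediate_value_Icc' hn0.le hf.continuousOn
        have h0mem : (0 : ℝ) ∈ Set.Icc (f n) (f 0) := ⟨h.le, by rw [hf0]; norm_num⟩
        obtain ⟨r, hr, hfr⟩ := hsub h0mem
        have : rho G u ≤ r := csInf_le hSbdd ⟨hr.1, hfr⟩
        linarith [hr.2]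
      · exfalso
        have : rho G u ≤ n := csInf_le hSbdd ⟨hn0.le, h⟩
        linarith
      · exact h
    rw [hfn] at hfn_pos
    exact lt_of_lt_of_le hfn_pos (minK_le G x W)
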